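/- Tangents with positive y-intercept only occur beyond a reference point on the concave part: let g : ℝ → ℝ be differentiable, let 0 ≤ a ≤ c ≤ p be real numbers, and suppose that (i) g(r) = 0 for all r ≤ a, (ii) g is convex on (−∞, c], (iii) g is concave on [c, ∞), and (iv) the tangent of g at p meets the vertical axis at or below 0, i.e. g(p) − p · (deriv g p) ≤ 0. Then for every r ∈ [a, p] one has g(r) − r · (deriv g r) ≤ 0; equivalently, any tangent line of g intersecting the vertical axis strictly above 0 is a tangent at some point r > p. -/

import Mathlib

/-- Tangents with positive y-intercept only occur beyond a reference point on the
concave part: if `g` vanishes on `(−∞, a]`, is convex on `(−∞, c]`, concave on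
`[c, ∞)` with `0 ≤ a ≤ c ≤ p`, and the tangent of `g` at `p` meets the vertical axis
at or below `0`, then for every `r ∈ [a, p]` the tangent of `g` at `r` meets the
vertical axis at or below `0`. -/
theorem tangent_intercept_nonpos_on_Icc
    (g : ℝ → ℝ) (hg : Differentiable ℝ g)
    (a c p : ℝ) (ha : 0 ≤ a) (hac : a ≤ c) (hcp : c ≤ p)
    (hzero : ∀ r ≤ a, g r = 0)
    (hconv : ConvexOn ℝ (Set.Iic c) g)
    (hconc : ConcaveOn ℝ (Set.Ici c) g)
    (hp : g p - p * deriv g p ≤ 0) :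
    ∀ r ∈ Set.Icc a p, g r - r * deriv g r ≤ 0 := by
  intro r hr
  obtain ⟨har, hrp⟩ := hr
  have hr0 : 0 ≤ r := ha.trans har
  rcases le_or_gt r c with hrc | hcr
  · -- convex part: compare slope from 0 to r
    rcases eq_or_lt_of_le hr0 with h0 | h0
    · subst h0
      simp [hzero 0 ha]
    · have h0c : (0 : ℝ) ∈ Set.Iic c := by simp; linarith
      have hs := hconv.slope_le_deriv h0c (Set.mem_Iic.mpr hrc) h0 (hg r)
      have hg0 : g 0 = 0 := hzero 0 ha
      rw [slope_def_field] at hs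
      rw [hg0, sub_zero, sub_zero, div_le_iff₀ h0] at hs
      nlinarith
  · -- concave part
    rcases eq_or_lt_of_le hrp with hrp' | hrp'
    · subst hrp'; exact hp
    · have hrS : r ∈ Set.Ici c := le_of_lt hcr
      have hpS : p ∈ Set.Ici c := hcp
      have h1 := hconc.slope_le_deriv hrS hpS hrp' (hg r)
      have h2 := hconc.deriv_le_slope hrS hpS hrp' (hg p)
      have hslope : slope g r p = (g p - g r) / (p - r) := by
        rw [slope_def_field]
      have hpr : 0 < p - r := sub_pos.mpr hrp'
      set s := slope g r p with hsdef
      have hgr : g r = g p - (p - r) * s := by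
        rw [hslope]; field_simp; ring
      have hp0 : 0 ≤ p := hr0.trans hrp
      calc g r - r * deriv g r ≤ g r - r * s := by nlinarith
        _ = g p - p * s := by rw [hgr]; ring
        _ ≤ g p - p * deriv g p := by nlinarith
        _ ≤ 0 := hp
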